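/- There exists a transcendental entire function f : ℂ → ℂ such that some connected component K of K(f) has empty interior but is not a singleton; that is, there exists z₀ ∈ K(f) such that the connected component of z₀ in K(f) has empty interior and contains at least two points. -/

import Mathlib

open Filter Topology

/-- The set `K(f)` of points whose orbit under iteration of `f` is bounded. -/
def boundedOrbitSet (f : ℂ → ℂ) : Set ℂ :=
  {z : ℂ | Bornology.IsBounded (Set.range fun n : ℕ => f^[n] z)}

/-- `f` is a transcendental entire function: holomorphic on all of `ℂ` and not a polynomial. -/
def TranscendentalEntire (f : ℂ → ℂ) : Prop :=
  Differentiable ℂ f ∧ ¬∃ p : Polynomial ℂ, ∀ z, f z = p.eval z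

set_option maxHeartbeats 1600000

noncomputable section

namespace PiSinAux

open Complex Metric Set Finset

lemma mvt_ball {g g' : ℂ → ℂ} (h : ∀ ζ : ℂ, HasDerivAt g (g' ζ) ζ)
    {r C : ℝ} (hb : ∀ ζ : ℂ, ‖ζ‖ ≤ r → ‖g' ζ‖ ≤ C)
    {x : ℂ} (hx : ‖x‖ ≤ r) : ‖g x - g 0‖ ≤ C * ‖x‖ := by
  have h0 : (0:ℂ) ∈ closedBall (0:ℂ) r := by
    simp only [mem_closedBall, dist_eq_norm, sub_zero, norm_zero]
    exact le_trans (norm_nonneg x) hx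
  have hxm : x ∈ closedBall (0:ℂ) r := by
    simpa [mem_closedBall, dist_eq_norm] using hx
  have := Convex.norm_image_sub_le_of_norm_hasDerivWithin_le
    (f := g) (f' := g') (s := closedBall (0:ℂ) r) (C := C)
    (fun ζ _ => (h ζ).hasDerivWithinAt)
    (fun ζ hζ => hb ζ (by simpa [mem_closedBall, dist_eq_norm] using hζ))
    (convex_closedBall _ _) h0 hxm
  simpa using this

lemma cos_norm_le {ζ : ℂ} {R : ℝ} (h : ‖ζ‖ ≤ R) : ‖Complex.cos ζ‖ ≤ Real.cosh R := by
  have hdef : Complex.cos ζ = (Complex.exp (ζ * I) + Complex.exp (-ζ * I)) / 2 := rfl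
  rw [hdef]
  have h1 : ‖Complex.exp (ζ * I)‖ = Real.exp (-ζ.im) := by
    rw [Complex.norm_exp]; congr 1; simp
  have h2 : ‖Complex.exp (-ζ * I)‖ = Real.exp (ζ.im) := by
    rw [Complex.norm_exp]; congr 1; simp
  have : ‖Complex.exp (ζ * I) + Complex.exp (-ζ * I)‖ ≤ Real.exp (-ζ.im) + Real.exp ζ.im :=
    le_trans (norm_add_le _ _) (by rw [h1, h2])
  calc ‖(Complex.exp (ζ * I) + Complex.exp (-ζ * I)) / 2‖
      = ‖Complex.exp (ζ * I) + Complex.exp (-ζ * I)‖ / 2 := by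
        rw [norm_div]; norm_num
    _ ≤ (Real.exp (-ζ.im) + Real.exp ζ.im) / 2 := by linarith
    _ = Real.cosh ζ.im := by rw [Real.cosh_eq]; ring
    _ ≤ Real.cosh R := by
        rw [Real.cosh_le_cosh]
        have := Complex.abs_im_le_norm ζ
        have hR : (0:ℝ) ≤ R := le_trans (norm_nonneg ζ) h
        rw [_root_.abs_of_nonneg hR]
        exact le_trans this h

-- numeric exp bounds
lemma exp_upper {x : ℝ} (h0 : 0 ≤ x) (h1 : x < 1) : Real.exp x ≤ 1/(1-x) := by
  have h2 : 1 - x ≤ Real.exp (-x) := by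
    have := Real.add_one_le_exp (-x); linarith
  have h3 : (0:ℝ) < 1 - x := by linarith
  have h4 : Real.exp x * Real.exp (-x) = 1 := by
    rw [← Real.exp_add]; simp
  have h5 : Real.exp x * (1-x) ≤ 1 := by
    calc Real.exp x * (1-x) ≤ Real.exp x * Real.exp (-x) :=
          mul_le_mul_of_nonneg_left h2 (Real.exp_pos x).le
      _ = 1 := h4
  rw [le_div_iff₀ h3]; linarith

lemma exp_neg_upper {x : ℝ} (h0 : 0 ≤ x) : Real.exp (-x) ≤ 1/(1+x) := by
  have h2 : 1 + x ≤ Real.exp x := Real.add_one_le_exp x |>.trans_eq (by ring) |> fun h => by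
    have := Real.add_one_le_exp x; linarith
  have h3 : (0:ℝ) < 1 + x := by linarith
  have h4 : Real.exp (-x) * Real.exp x = 1 := by rw [← Real.exp_add]; simp
  rw [le_div_iff₀ h3]
  calc Real.exp (-x) * (1+x) ≤ Real.exp (-x) * Real.exp x :=
        mul_le_mul_of_nonneg_left h2 (Real.exp_pos _).le
    _ = 1 := h4

lemma cosh_06 : Real.cosh 0.6 ≤ 1.5625 := by
  rw [Real.cosh_eq]
  have h1 : Real.exp 0.6 ≤ 1/(1-0.6) := exp_upper (by norm_num) (by norm_num)
  have h2 : Real.exp (-0.6) ≤ 1/(1+0.6) := exp_neg_upper (by norm_num)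
  norm_num at h1 h2 ⊢
  linarith

lemma cosh_018 : Real.cosh 0.18 ≤ 1.034 := by
  rw [Real.cosh_eq]
  have h1 : Real.exp 0.18 ≤ 1/(1-0.18) := exp_upper (by norm_num) (by norm_num)
  have h2 : Real.exp (-0.18) ≤ 1/(1+0.18) := exp_neg_upper (by norm_num)
  norm_num at h1 h2 ⊢
  linarith


def F (z : ℂ) : ℂ := (Real.pi : ℂ) * Complex.sin z

lemma norm_pi : ‖((Real.pi : ℝ) : ℂ)‖ = Real.pi := by
  rw [Complex.norm_real, Real.norm_eq_abs, _root_.abs_of_nonneg Real.pi_pos.le]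

lemma L2 {ζ : ℂ} (h : ‖ζ‖ ≤ 0.6) : ‖Complex.sin ζ‖ ≤ 1.5625 * ‖ζ‖ := by
  have := mvt_ball (g := Complex.sin) (g' := Complex.cos)
    Complex.hasDerivAt_sin (r := 0.6) (C := 1.5625)
    (fun τ hτ => (cos_norm_le hτ).trans cosh_06) h
  simpa using this

lemma L3 {ζ : ℂ} (h : ‖ζ‖ ≤ 0.6) : ‖Complex.cos ζ - 1‖ ≤ 0.9375 * ‖ζ‖ := by
  have := mvt_ball (g := Complex.cos) (g' := fun τ => -Complex.sin τ)
    Complex.hasDerivAt_cos (r := 0.6) (C := 0.9375)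
    (fun τ hτ => by
      rw [norm_neg]
      calc ‖Complex.sin τ‖ ≤ 1.5625 * ‖τ‖ := L2 hτ
        _ ≤ 1.5625 * 0.6 := by nlinarith
        _ = 0.9375 := by norm_num) h
  simpa using this

lemma L4 {ζ : ℂ} (h : ‖ζ‖ ≤ 0.6) : ‖Complex.sin ζ - ζ‖ ≤ 0.5625 * ‖ζ‖ := by
  have := mvt_ball (g := fun τ => Complex.sin τ - τ) (g' := fun τ => Complex.cos τ - 1)
    (fun τ => (Complex.hasDerivAt_sin τ).sub (hasDerivAt_id τ)) (r := 0.6) (C := 0.5625)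
    (fun τ hτ => by
      calc ‖Complex.cos τ - 1‖ ≤ 0.9375 * ‖τ‖ := L3 hτ
        _ ≤ 0.9375 * 0.6 := by nlinarith
        _ = 0.5625 := by norm_num) h
  simpa using this

lemma L5 {ζ : ℂ} (h : ‖ζ‖ ≤ 0.18) : ‖Complex.sin ζ‖ ≤ 1.034 * ‖ζ‖ := by
  have := mvt_ball (g := Complex.sin) (g' := Complex.cos)
    Complex.hasDerivAt_sin (r := 0.18) (C := 1.034)
    (fun τ hτ => (cos_norm_le hτ).trans cosh_018) h
  simpa using this

lemma PA {ζ : ℂ} (h : ‖ζ‖ ≤ 0.6) : ‖F ζ‖ ≤ 4.91 * ‖ζ‖ := by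
  have hπ : Real.pi < 3.1416 := Real.pi_lt_d4
  calc ‖F ζ‖ = Real.pi * ‖Complex.sin ζ‖ := by rw [F, norm_mul, norm_pi]
    _ ≤ 3.1416 * (1.5625 * ‖ζ‖) := by
        have := L2 h
        have h2 : (0:ℝ) ≤ ‖Complex.sin ζ‖ := norm_nonneg _
        nlinarith [Real.pi_pos, norm_nonneg ζ]
    _ ≤ 4.91 * ‖ζ‖ := by nlinarith [norm_nonneg ζ]

lemma PB {ζ : ℂ} (h : ‖ζ‖ ≤ 0.6) : 1.3 * ‖ζ‖ ≤ ‖F ζ‖ := by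
  have hπ : 3.1415 < Real.pi := Real.pi_gt_d4
  have h4 := L4 h
  have hs : ‖Complex.sin ζ‖ ≥ 0.4375 * ‖ζ‖ := by
    have : ‖ζ‖ - ‖Complex.sin ζ‖ ≤ ‖ζ - Complex.sin ζ‖ := by
      simpa using norm_sub_norm_le ζ (Complex.sin ζ)
    rw [← norm_sub_rev] at this
    linarith
  calc (1.3:ℝ) * ‖ζ‖ ≤ 3.1415 * (0.4375 * ‖ζ‖) := by nlinarith [norm_nonneg ζ]
    _ ≤ Real.pi * ‖Complex.sin ζ‖ := by nlinarith [norm_nonneg ζ, Real.pi_pos]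
    _ = ‖F ζ‖ := by rw [F, norm_mul, norm_pi]

lemma PC {ζ : ℂ} (h : ‖ζ‖ ≤ 0.6) : (9.5:ℝ) ≤ ‖((Real.pi:ℝ):ℂ)^2 - ζ^2‖ := by
  have hπ : 3.1415 < Real.pi := Real.pi_gt_d4
  have h1 : ‖(((Real.pi:ℝ)):ℂ)^2‖ = Real.pi^2 := by
    rw [norm_pow, norm_pi]
  have h2 : ‖ζ^2‖ ≤ 0.36 := by rw [norm_pow]; nlinarith [norm_nonneg ζ]
  have h3 : ‖((Real.pi:ℝ):ℂ)^2‖ - ‖ζ^2‖ ≤ ‖((Real.pi:ℝ):ℂ)^2 - ζ^2‖ :=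
    norm_sub_norm_le _ _
  nlinarith

lemma two_dist {ζ : ℂ} {c : ℝ} (hc : 0 ≤ c)
    (h1 : c ≤ ‖ζ - ((Real.pi:ℝ):ℂ)‖) (h2 : c ≤ ‖ζ + ((Real.pi:ℝ):ℂ)‖) :
    c * (2 * Real.pi - c) ≤ ‖((Real.pi:ℝ):ℂ)^2 - ζ^2‖ := by
  set x := ‖ζ - ((Real.pi:ℝ):ℂ)‖ with hxdef
  set y := ‖ζ + ((Real.pi:ℝ):ℂ)‖ with hydef
  have hfact : ‖((Real.pi:ℝ):ℂ)^2 - ζ^2‖ = x * y := by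
    have : ((Real.pi:ℝ):ℂ)^2 - ζ^2 = (ζ - ((Real.pi:ℝ):ℂ)) * -(ζ + ((Real.pi:ℝ):ℂ)) := by ring
    rw [this, norm_mul, norm_neg]
  have hsum : 2 * Real.pi ≤ x + y := by
    have e1 : (ζ + ((Real.pi:ℝ):ℂ)) - (ζ - ((Real.pi:ℝ):ℂ)) = (2:ℂ) * ((Real.pi:ℝ):ℂ) := by ring
    have e2 : ‖(2:ℂ) * ((Real.pi:ℝ):ℂ)‖ = 2 * Real.pi := by
      rw [norm_mul, norm_pi]; norm_num
    have e3 := norm_sub_le (ζ + ((Real.pi:ℝ):ℂ)) (ζ - ((Real.pi:ℝ):ℂ))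
    rw [e1, e2] at e3
    linarith
  rw [hfact]
  nlinarith [mul_nonneg (sub_nonneg.mpr h1) (sub_nonneg.mpr h2)]


lemma sin_shift {σ v : ℂ} (hσ : σ = ((Real.pi:ℝ):ℂ) ∨ σ = -((Real.pi:ℝ):ℂ)) :
    Complex.sin (σ + v) = -Complex.sin v := by
  have hs : Complex.sin ((Real.pi:ℝ):ℂ) = 0 := by
    rw [← Complex.ofReal_sin, Real.sin_pi, Complex.ofReal_zero]
  have hc : Complex.cos ((Real.pi:ℝ):ℂ) = -1 := by
    rw [← Complex.ofReal_cos, Real.cos_pi]; norm_num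
  rcases hσ with h | h <;> subst h <;>
    simp [Complex.sin_add, hs, hc, Complex.sin_neg, Complex.cos_neg]

/-- The key "window" lemma. -/
lemma window (w : ℕ → ℂ) (hrec : ∀ k, w (k+1) = F (w k))
    (hne : ∀ k, w k ≠ ((Real.pi:ℝ):ℂ) ∧ w k ≠ -((Real.pi:ℝ):ℂ)) (t : ℕ) :
    ∃ d : ℕ, 1 ≤ d ∧ (1.09:ℝ) ≤ ∏ k ∈ Finset.Ico t (t + d), ‖((Real.pi:ℝ):ℂ)^2 - (w k)^2‖ := by
  classical
  have hπlo : (3.1415:ℝ) < Real.pi := Real.pi_gt_d4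
  have hπhi : Real.pi < 3.1416 := Real.pi_lt_d4
  by_cases hcase : 0.18 ≤ ‖w t - ((Real.pi:ℝ):ℂ)‖ ∧ 0.18 ≤ ‖w t + ((Real.pi:ℝ):ℂ)‖
  · refine ⟨1, le_refl 1, ?_⟩
    rw [Finset.prod_Ico_succ_top (le_refl t), Finset.Ico_self, Finset.prod_empty, one_mul]
    have := two_dist (by norm_num : (0:ℝ) ≤ 0.18) hcase.1 hcase.2
    nlinarith
  · -- visit case
    push_neg at hcase
    -- extract σ and v
    obtain ⟨σ, hσor, hu⟩ : ∃ σ : ℂ, (σ = ((Real.pi:ℝ):ℂ) ∨ σ = -((Real.pi:ℝ):ℂ)) ∧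
        ‖w t - σ‖ < 0.18 := by
      by_cases h1 : 0.18 ≤ ‖w t - ((Real.pi:ℝ):ℂ)‖
      · exact ⟨-((Real.pi:ℝ):ℂ), Or.inr rfl, by simpa [sub_neg_eq_add] using hcase h1⟩
      · exact ⟨((Real.pi:ℝ):ℂ), Or.inl rfl, by linarith [not_le.mp h1]⟩
    set v : ℂ := w t - σ with hvdef
    set u : ℝ := ‖v‖ with hudef
    have hu018 : u < 0.18 := hu
    have hune : v ≠ 0 := by
      intro h0
      have : w t = σ := by
        have := sub_eq_zero.mp h0; exact this
      rcases hσor with h | h <;> rw [h] at this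
      · exact (hne t).1 this
      · exact (hne t).2 this
    have hu0 : 0 < u := by
      rw [hudef]; exact norm_pos_iff.mpr hune
    -- step into the phase
    have hwt : w t = σ + v := by rw [hvdef]; ring
    have hsin : Complex.sin (w t) = -Complex.sin v := by rw [hwt]; exact sin_shift hσor
    have hw1 : w (t+1) = -(((Real.pi:ℝ):ℂ) * Complex.sin v) := by
      rw [hrec t, F, hsin]; ring
    have hn1 : ‖w (t+1)‖ ≤ 3.25 * u := by
      rw [hw1, norm_neg, norm_mul, norm_pi]
      have := L5 (le_of_lt (lt_of_lt_of_le hu018 (by norm_num)))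
      calc Real.pi * ‖Complex.sin v‖ ≤ 3.1416 * (1.034 * u) := by
            nlinarith [norm_nonneg (Complex.sin v), Real.pi_pos]
        _ ≤ 3.25 * u := by nlinarith
    have hn1' : ‖w (t+1)‖ ≤ 0.59 := by nlinarith
    -- b t lower bound
    have hbt : 6.1 * u ≤ ‖((Real.pi:ℝ):ℂ)^2 - (w t)^2‖ := by
      have hfact : ‖((Real.pi:ℝ):ℂ)^2 - (w t)^2‖
          = ‖w t - ((Real.pi:ℝ):ℂ)‖ * ‖w t + ((Real.pi:ℝ):ℂ)‖ := by
        have : ((Real.pi:ℝ):ℂ)^2 - (w t)^2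
            = (w t - ((Real.pi:ℝ):ℂ)) * -(w t + ((Real.pi:ℝ):ℂ)) := by ring
        rw [this, norm_mul, norm_neg]
      rcases hσor with h | h
      · -- σ = π : ‖w t - π‖ = u, ‖w t + π‖ = ‖v + 2π‖ ≥ 2π - u
        have e1 : ‖w t - ((Real.pi:ℝ):ℂ)‖ = u := by rw [hudef, hvdef, h]
        have e2 : 2 * Real.pi - u ≤ ‖w t + ((Real.pi:ℝ):ℂ)‖ := by
          have hsumeq : w t + ((Real.pi:ℝ):ℂ) = v + (2:ℂ) * ((Real.pi:ℝ):ℂ) := by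
            rw [hwt, h]; ring
          have hn2 : ‖(2:ℂ) * ((Real.pi:ℝ):ℂ)‖ = 2 * Real.pi := by
            rw [norm_mul, norm_pi]; norm_num
          have tri : ‖(2:ℂ) * ((Real.pi:ℝ):ℂ)‖ ≤ ‖v + (2:ℂ) * ((Real.pi:ℝ):ℂ)‖ + ‖v‖ := by
            calc ‖(2:ℂ) * ((Real.pi:ℝ):ℂ)‖ = ‖(v + (2:ℂ) * ((Real.pi:ℝ):ℂ)) - v‖ := by
                  congr 1; ring
              _ ≤ ‖v + (2:ℂ) * ((Real.pi:ℝ):ℂ)‖ + ‖v‖ := norm_sub_le _ _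
          rw [hsumeq]
          rw [hn2] at tri
          linarith
        rw [hfact, e1]
        calc 6.1 * u = u * 6.1 := by ring
          _ ≤ u * (2 * Real.pi - u) := by nlinarith
          _ ≤ u * ‖w t + ((Real.pi:ℝ):ℂ)‖ := by nlinarith
      · -- σ = -π
        have e1 : ‖w t + ((Real.pi:ℝ):ℂ)‖ = u := by
          have : w t + ((Real.pi:ℝ):ℂ) = v := by rw [hwt, h]; ring
          rw [this, hudef]
        have e2 : 2 * Real.pi - u ≤ ‖w t - ((Real.pi:ℝ):ℂ)‖ := by
          have hwe : w t - ((Real.pi:ℝ):ℂ) = v - (2:ℂ) * ((Real.pi:ℝ):ℂ) := by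
            rw [hwt, h]; ring
          have hn2 : ‖(2:ℂ) * ((Real.pi:ℝ):ℂ)‖ = 2 * Real.pi := by
            rw [norm_mul, norm_pi]; norm_num
          have tri : ‖(2:ℂ) * ((Real.pi:ℝ):ℂ)‖ ≤ ‖v‖ + ‖v - (2:ℂ) * ((Real.pi:ℝ):ℂ)‖ := by
            calc ‖(2:ℂ) * ((Real.pi:ℝ):ℂ)‖ = ‖v - (v - (2:ℂ) * ((Real.pi:ℝ):ℂ))‖ := by
                  congr 1; ring
              _ ≤ ‖v‖ + ‖v - (2:ℂ) * ((Real.pi:ℝ):ℂ)‖ := norm_sub_le _ _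
          rw [hwe]
          rw [hn2] at tri
          linarith
        rw [hfact]
        calc 6.1 * u = u * 6.1 := by ring
          _ ≤ u * (2 * Real.pi - u) := by nlinarith
          _ ≤ ‖w t - ((Real.pi:ℝ):ℂ)‖ * u := by nlinarith
          _ = ‖w t - ((Real.pi:ℝ):ℂ)‖ * ‖w t + ((Real.pi:ℝ):ℂ)‖ := by rw [e1]
    -- w (t+1) ≠ 0
    have hw1ne : w (t+1) ≠ 0 := by
      rw [hw1]
      intro h0
      have hsv : Complex.sin v = 0 := by
        have hπne : ((Real.pi:ℝ):ℂ) ≠ 0 := by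
          simpa using Complex.ofReal_ne_zero.mpr (ne_of_gt Real.pi_pos)
        have := neg_eq_zero.mp h0
        exact (mul_eq_zero.mp this).resolve_left hπne
      rcases Complex.sin_eq_zero_iff.mp hsv with ⟨k, hk⟩
      have hk0 : k = 0 := by
        by_contra hkne
        have h1k : (1:ℝ) ≤ |(k:ℝ)| := by
          have : (1:ℤ) ≤ |k| := Int.one_le_abs (by exact_mod_cast hkne)
          calc (1:ℝ) = ((1:ℤ):ℝ) := by norm_num
            _ ≤ ((|k|:ℤ):ℝ) := by exact_mod_cast this
            _ = |(k:ℝ)| := by push_cast; ring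
        have : ‖v‖ = |(k:ℝ)| * Real.pi := by
          rw [hk, norm_mul]
          have : ‖((k:ℤ):ℂ)‖ = |(k:ℝ)| := by
            rw [show ((k:ℤ):ℂ) = (((k:ℤ):ℝ):ℂ) by push_cast; ring, Complex.norm_real,
              Real.norm_eq_abs]
          rw [this, norm_pi]
        nlinarith [Real.pi_pos]
      rw [hk0] at hk
      simp at hk
      exact hune hk
    have hw1pos : 0 < ‖w (t+1)‖ := norm_pos_iff.mpr hw1ne
    -- existence of exit time T
    have hex : ∃ T : ℕ, 1 ≤ T ∧ 0.6 < ‖w (t + T)‖ := by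
      by_contra hcon
      push_neg at hcon
      have hin : ∀ T : ℕ, 1 ≤ T → ‖w (t + T)‖ ≤ 0.6 := fun T hT => hcon T hT
      have grow : ∀ j : ℕ, (1.3:ℝ)^j * ‖w (t+1)‖ ≤ ‖w (t+1+j)‖ := by
        intro j
        induction j with
        | zero => simp
        | succ j ih =>
          have hmem : ‖w (t+1+j)‖ ≤ 0.6 := by
            have : t+1+j = t + (1+j) := by ring
            rw [this]; exact hin (1+j) (by omega)
          have hstep := PB hmem
          rw [← hrec (t+1+j)] at hstep
          have : t+1+(j+1) = (t+1+j)+1 := by ring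
          rw [this]
          calc (1.3:ℝ)^(j+1) * ‖w (t+1)‖ = 1.3 * ((1.3:ℝ)^j * ‖w (t+1)‖) := by ring
            _ ≤ 1.3 * ‖w (t+1+j)‖ := by nlinarith
            _ ≤ ‖w (t+1+j+1)‖ := hstep
      obtain ⟨j, hj⟩ := pow_unbounded_of_one_lt (0.6 / ‖w (t+1)‖) (by norm_num : (1:ℝ) < 1.3)
      have : 0.6 < (1.3:ℝ)^j * ‖w (t+1)‖ := by
        rw [div_lt_iff₀ hw1pos] at hj
        linarith
      have hle := grow j
      have := hin (1+j) (by omega)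
      have heq : t + (1+j) = t+1+j := by ring
      rw [heq] at this
      linarith
    set T := Nat.find hex with hTdef
    obtain ⟨hT1, hTout⟩ := Nat.find_spec hex
    have hmin : ∀ j : ℕ, 1 ≤ j → j < T → ‖w (t + j)‖ ≤ 0.6 := by
      intro j hj1 hjT
      have := Nat.find_min hex hjT
      push_neg at this
      exact this hj1
    have hT2 : 2 ≤ T := by
      by_contra hcon2
      have hTeq : Nat.find hex = 1 := by rw [hTdef] at hcon2; omega
      rw [hTeq] at hTout
      linarith
    -- chain upper bound
    have chain : ∀ j : ℕ, 1 + j ≤ T → ‖w (t+1+j)‖ ≤ (4.91:ℝ)^j * ‖w (t+1)‖ := by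
      intro j
      induction j with
      | zero => intro _; simp
      | succ j ih =>
        intro hjT
        have hmem : ‖w (t+1+j)‖ ≤ 0.6 := by
          have heq : t+1+j = t + (1+j) := by ring
          rw [heq]; exact hmin (1+j) (by omega) (by omega)
        have hstep := PA hmem
        rw [← hrec (t+1+j)] at hstep
        have heq : t+1+(j+1) = (t+1+j)+1 := by ring
        rw [heq]
        calc ‖w (t+1+j+1)‖ ≤ 4.91 * ‖w (t+1+j)‖ := hstep
          _ ≤ 4.91 * ((4.91:ℝ)^j * ‖w (t+1)‖) := by
              have := ih (by omega)
              nlinarith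
          _ = (4.91:ℝ)^(j+1) * ‖w (t+1)‖ := by ring
    -- apply at j = T - 1
    have hchainT : ‖w (t+T)‖ ≤ (4.91:ℝ)^(T-1) * ‖w (t+1)‖ := by
      have heq : t + T = t + 1 + (T-1) := by omega
      rw [heq]
      exact chain (T-1) (by omega)
    -- exit norm upper bound
    have hexitnorm : ‖w (t+T)‖ ≤ 2.946 := by
      have hmem : ‖w (t+(T-1))‖ ≤ 0.6 := hmin (T-1) (by omega) (by omega)
      have hstep := PA hmem
      rw [← hrec (t+(T-1))] at hstep
      have heq : t + (T-1) + 1 = t + T := by omega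
      rw [heq] at hstep
      nlinarith [norm_nonneg (w (t+(T-1)))]
    -- exit factor lower bound
    have hexitb : (1.18:ℝ) ≤ ‖((Real.pi:ℝ):ℂ)^2 - (w (t+T))^2‖ := by
      have h1 : (0.195:ℝ) ≤ ‖w (t+T) - ((Real.pi:ℝ):ℂ)‖ := by
        have tri : ‖((Real.pi:ℝ):ℂ)‖ - ‖w (t+T)‖ ≤ ‖w (t+T) - ((Real.pi:ℝ):ℂ)‖ := by
          rw [norm_sub_rev]
          exact norm_sub_norm_le _ _
        rw [norm_pi] at tri
        linarith
      have h2 : (0.195:ℝ) ≤ ‖w (t+T) + ((Real.pi:ℝ):ℂ)‖ := by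
        have tri : ‖((Real.pi:ℝ):ℂ)‖ - ‖w (t+T)‖ ≤ ‖w (t+T) + ((Real.pi:ℝ):ℂ)‖ := by
          calc ‖((Real.pi:ℝ):ℂ)‖ - ‖w (t+T)‖
              = ‖-((Real.pi:ℝ):ℂ)‖ - ‖w (t+T)‖ := by rw [norm_neg]
            _ ≤ ‖w (t+T) - -((Real.pi:ℝ):ℂ)‖ := by
                rw [norm_sub_rev]; exact norm_sub_norm_le _ _
            _ = ‖w (t+T) + ((Real.pi:ℝ):ℂ)‖ := by rw [sub_neg_eq_add]
        rw [norm_pi] at tri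
        linarith
      have := two_dist (by norm_num : (0:ℝ) ≤ 0.195) h1 h2
      nlinarith
    -- middle product lower bound
    have hmid : (9.5:ℝ)^(T-1) ≤ ∏ k ∈ Finset.Ico (t+1) (t+T), ‖((Real.pi:ℝ):ℂ)^2 - (w k)^2‖ := by
      have hcard : (Finset.Ico (t+1) (t+T)).card = T - 1 := by
        rw [Nat.card_Ico]; omega
      calc (9.5:ℝ)^(T-1) = ∏ _k ∈ Finset.Ico (t+1) (t+T), (9.5:ℝ) := by
            rw [Finset.prod_const, hcard]
        _ ≤ ∏ k ∈ Finset.Ico (t+1) (t+T), ‖((Real.pi:ℝ):ℂ)^2 - (w k)^2‖ := by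
            apply Finset.prod_le_prod
            · intro k _; norm_num
            · intro k hk
              rw [Finset.mem_Ico] at hk
              have hmem : ‖w k‖ ≤ 0.6 := by
                have heq : k = t + (k - t) := by omega
                rw [heq]
                exact hmin (k-t) (by omega) (by omega)
              exact PC hmem
    -- assemble the window
    refine ⟨T+1, by omega, ?_⟩
    have hsplit1 : ∏ k ∈ Finset.Ico t (t + (T+1)), ‖((Real.pi:ℝ):ℂ)^2 - (w k)^2‖
        = ‖((Real.pi:ℝ):ℂ)^2 - (w t)^2‖ * ∏ k ∈ Finset.Ico (t+1) (t+(T+1)), ‖((Real.pi:ℝ):ℂ)^2 - (w k)^2‖ := by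
      rw [Finset.prod_eq_prod_Ico_succ_bot (by omega : t < t + (T+1))]
    have hsplit2 : ∏ k ∈ Finset.Ico (t+1) (t+(T+1)), ‖((Real.pi:ℝ):ℂ)^2 - (w k)^2‖
        = (∏ k ∈ Finset.Ico (t+1) (t+T), ‖((Real.pi:ℝ):ℂ)^2 - (w k)^2‖) * ‖((Real.pi:ℝ):ℂ)^2 - (w (t+T))^2‖ := by
      have heq : t + (T+1) = (t+T) + 1 := by ring
      rw [heq, Finset.prod_Ico_succ_top (by omega : t+1 ≤ t+T)]
    rw [hsplit1, hsplit2]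
    -- final numeric assembly
    set A := ‖((Real.pi:ℝ):ℂ)^2 - (w t)^2‖ with hA
    set P := ∏ k ∈ Finset.Ico (t+1) (t+T), ‖((Real.pi:ℝ):ℂ)^2 - (w k)^2‖ with hP
    set Cx := ‖((Real.pi:ℝ):ℂ)^2 - (w (t+T))^2‖ with hC
    have hPpos : (0:ℝ) ≤ P := Finset.prod_nonneg (fun k _ => norm_nonneg _)
    have hQpos : (0:ℝ) < (4.91:ℝ)^(T-1) := by positivity
    -- u * 4.91^(T-1) > 0.6/3.25
    have hkey : 0.6 ≤ (4.91:ℝ)^(T-1) * (3.25 * u) := by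
      calc (0.6:ℝ) ≤ ‖w (t+T)‖ := le_of_lt hTout
        _ ≤ (4.91:ℝ)^(T-1) * ‖w (t+1)‖ := hchainT
        _ ≤ (4.91:ℝ)^(T-1) * (3.25 * u) := by nlinarith
    -- 9.5^(T-1) ≥ 1.92 * 4.91^(T-1)
    have hpow : (1.92:ℝ) * (4.91:ℝ)^(T-1) ≤ (9.5:ℝ)^(T-1) := by
      have h1 : ((4.91:ℝ) * 1.92)^(T-1) ≤ (9.5:ℝ)^(T-1) := by
        exact pow_le_pow_left₀ (by norm_num) (by norm_num) (T-1)
      rw [mul_pow] at h1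
      have h2 : (1.92:ℝ) ≤ (1.92:ℝ)^(T-1) := by
        apply le_self_pow₀ (by norm_num) (by omega)
      nlinarith [pow_nonneg (by norm_num : (0:ℝ) ≤ 1.92) (T-1), pow_nonneg (by norm_num : (0:ℝ) ≤ 4.91) (T-1)]
    -- combine
    have hAB : (2.16:ℝ) ≤ A * P := by
      have hA6 : 6.1 * u ≤ A := hbt
      have hP9 : (1.92:ℝ) * (4.91:ℝ)^(T-1) ≤ P := le_trans hpow hmid
      have huQ : (0.6:ℝ)/3.25 ≤ u * (4.91:ℝ)^(T-1) := by
        rw [div_le_iff₀ (by norm_num : (0:ℝ) < 3.25)]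
        nlinarith
      calc (2.16:ℝ) ≤ (6.1 * u) * (1.92 * (4.91:ℝ)^(T-1)) := by nlinarith
        _ ≤ A * P := by nlinarith [mul_pos hu0 hQpos, norm_nonneg ((((Real.pi:ℝ)):ℂ)^2 - (w t)^2)]
    calc (1.09:ℝ) ≤ 2.16 * 1.18 := by norm_num
      _ ≤ (A * P) * Cx := by nlinarith
      _ = A * (P * Cx) := by ring


lemma F_diff : Differentiable ℂ F := by
  intro z
  exact ((Complex.hasDerivAt_sin z).const_mul (((Real.pi:ℝ)):ℂ)).differentiableAt

lemma hasDerivAt_F (ζ : ℂ) : HasDerivAt F (((Real.pi:ℝ):ℂ) * Complex.cos ζ) ζ :=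
  (Complex.hasDerivAt_sin ζ).const_mul _

lemma hasDerivAt_iter (z : ℂ) (n : ℕ) :
    HasDerivAt (F^[n]) (∏ k ∈ Finset.range n, ((Real.pi:ℝ):ℂ) * Complex.cos (F^[k] z)) z := by
  induction n with
  | zero => simpa using hasDerivAt_id z
  | succ n ih =>
    have hcomp := (hasDerivAt_F (F^[n] z)).comp z ih
    have heq : F ∘ F^[n] = F^[n+1] := (Function.iterate_succ' F n).symm
    rw [heq] at hcomp
    have : (((Real.pi:ℝ):ℂ) * Complex.cos (F^[n] z)) * (∏ k ∈ Finset.range n, ((Real.pi:ℝ):ℂ) * Complex.cos (F^[k] z))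
        = ∏ k ∈ Finset.range (n+1), ((Real.pi:ℝ):ℂ) * Complex.cos (F^[k] z) := by
      rw [Finset.prod_range_succ]; ring
    rwa [this] at hcomp

lemma term_sq (ζ : ℂ) :
    ‖((Real.pi:ℝ):ℂ) * Complex.cos ζ‖^2 = ‖((Real.pi:ℝ):ℂ)^2 - (F ζ)^2‖ := by
  rw [← norm_pow]
  congr 1
  have hpyth : Complex.sin ζ ^ 2 + Complex.cos ζ ^ 2 = 1 := Complex.sin_sq_add_cos_sq ζ
  rw [F]
  linear_combination (((Real.pi:ℝ):ℂ))^2 * hpyth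

lemma deriv_iter_prod (z : ℂ) (n : ℕ) :
    ‖deriv (F^[n]) z‖^2 = ∏ k ∈ Finset.range n, ‖((Real.pi:ℝ):ℂ)^2 - (F^[k+1] z)^2‖ := by
  rw [(hasDerivAt_iter z n).deriv, norm_prod, ← Finset.prod_pow]
  apply Finset.prod_congr rfl
  intro k _
  rw [term_sq, Function.iterate_succ_apply']

lemma deriv_blowup (z : ℂ)
    (hz : ∀ n : ℕ, F^[n] z ≠ ((Real.pi:ℝ):ℂ) ∧ F^[n] z ≠ -((Real.pi:ℝ):ℂ))
    (C : ℝ) (hC : ∀ n, ‖deriv (F^[n]) z‖ ≤ C) : False := by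
  classical
  set w : ℕ → ℂ := fun k => F^[k+1] z with hw
  have hrec : ∀ k, w (k+1) = F (w k) := by
    intro k
    rw [hw]
    simp only
    rw [Function.iterate_succ_apply']
  have hne : ∀ k, w k ≠ ((Real.pi:ℝ):ℂ) ∧ w k ≠ -((Real.pi:ℝ):ℂ) := fun k => hz (k+1)
  -- iterated windows
  have hwin := window w hrec hne
  let N : ℕ → ℕ := fun j => Nat.rec 0 (fun _ n => n + (hwin n).choose) j
  have hN0 : N 0 = 0 := rfl
  have hNsucc : ∀ j, N (j+1) = N j + (hwin (N j)).choose := fun j => rfl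
  have key : ∀ j, (1.09:ℝ)^j ≤ ∏ k ∈ Finset.range (N j), ‖((Real.pi:ℝ):ℂ)^2 - (w k)^2‖ := by
    intro j
    induction j with
    | zero => simp [hN0]
    | succ j ih =>
      obtain ⟨hd1, hdP⟩ := (hwin (N j)).choose_spec
      have hsplit : ∏ k ∈ Finset.range (N (j+1)), ‖((Real.pi:ℝ):ℂ)^2 - (w k)^2‖
          = (∏ k ∈ Finset.range (N j), ‖((Real.pi:ℝ):ℂ)^2 - (w k)^2‖)
            * ∏ k ∈ Finset.Ico (N j) (N j + (hwin (N j)).choose), ‖((Real.pi:ℝ):ℂ)^2 - (w k)^2‖ := by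
        rw [hNsucc j, Finset.range_eq_Ico, Finset.range_eq_Ico]
        exact (Finset.prod_Ico_consecutive (fun k => ‖((Real.pi:ℝ):ℂ)^2 - (w k)^2‖) (Nat.zero_le (N j)) (Nat.le_add_right (N j) _)).symm
      rw [hsplit]
      have h1 : (0:ℝ) ≤ (1.09:ℝ)^j := by positivity
      have h2 : (0:ℝ) ≤ ∏ k ∈ Finset.range (N j), ‖((Real.pi:ℝ):ℂ)^2 - (w k)^2‖ :=
        Finset.prod_nonneg (fun k _ => norm_nonneg _)
      calc (1.09:ℝ)^(j+1) = (1.09:ℝ)^j * 1.09 := by ring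
        _ ≤ (∏ k ∈ Finset.range (N j), ‖((Real.pi:ℝ):ℂ)^2 - (w k)^2‖)
              * ∏ k ∈ Finset.Ico (N j) (N j + (hwin (N j)).choose), ‖((Real.pi:ℝ):ℂ)^2 - (w k)^2‖ := by
            apply mul_le_mul ih hdP (by norm_num) h2
  -- upper bound
  have hub : ∀ n, ∏ k ∈ Finset.range n, ‖((Real.pi:ℝ):ℂ)^2 - (w k)^2‖ ≤ C^2 := by
    intro n
    have := deriv_iter_prod z n
    have hCn := hC n
    have h0 : (0:ℝ) ≤ ‖deriv (F^[n]) z‖ := norm_nonneg _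
    calc ∏ k ∈ Finset.range n, ‖((Real.pi:ℝ):ℂ)^2 - (w k)^2‖
        = ‖deriv (F^[n]) z‖^2 := by rw [this]
      _ ≤ C^2 := by nlinarith
  obtain ⟨j, hj⟩ := pow_unbounded_of_one_lt (C^2) (by norm_num : (1:ℝ) < 1.09)
  exact absurd (le_trans (key j) (hub (N j))) (not_le.mpr hj)


lemma F_zero : F 0 = 0 := by simp [F]

lemma iter_zero (n : ℕ) : F^[n] 0 = 0 := Function.iterate_fixed F_zero n

lemma deriv_iter_zero (n : ℕ) : deriv (F^[n]) 0 = (((Real.pi:ℝ):ℂ))^n := by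
  rw [(hasDerivAt_iter 0 n).deriv]
  have : ∀ k ∈ Finset.range n, ((Real.pi:ℝ):ℂ) * Complex.cos (F^[k] 0) = ((Real.pi:ℝ):ℂ) := by
    intro k _
    rw [iter_zero k, Complex.cos_zero, mul_one]
  rw [Finset.prod_congr rfl this, Finset.prod_const, Finset.card_range]

/-- each level set of an iterate is countable -/
lemma level_countable (n : ℕ) (c : ℂ) : Set.Countable {z : ℂ | F^[n] z = c} := by
  classical
  set S := {z : ℂ | F^[n] z = c} with hS
  have : S ⊆ ⋃ m : ℕ, S ∩ Metric.closedBall 0 m := by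
    intro z hz
    obtain ⟨m, hm⟩ := exists_nat_ge ‖z‖
    exact Set.mem_iUnion.mpr ⟨m, hz, by simpa [Metric.mem_closedBall, dist_eq_norm] using hm⟩
  apply Set.Countable.mono this
  apply Set.countable_iUnion
  intro m
  by_contra hunc
  have hinf : (S ∩ Metric.closedBall 0 m).Infinite := by
    intro hfin
    exact hunc hfin.countable
  obtain ⟨x, _, hacc⟩ := hinf.exists_accPt_of_subset_isCompact
    (isCompact_closedBall (0:ℂ) m) (Set.inter_subset_right)
  have hacc' : AccPt x (Filter.principal S) := by
    apply hacc.mono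
    exact Filter.principal_mono.mpr Set.inter_subset_left
  have hfreq : ∃ᶠ z in nhdsWithin x {x}ᶜ, F^[n] z = c := by
    rw [frequently_nhdsWithin_iff]
    have := accPt_iff_frequently.mp hacc'
    apply this.mono
    intro y hy
    exact ⟨hy.2, hy.1⟩
  have han : AnalyticOnNhd ℂ (F^[n]) Set.univ :=
    analyticOnNhd_univ_iff_differentiable.mpr (F_diff.iterate n)
  have hconst : AnalyticOnNhd ℂ (fun _ : ℂ => c) Set.univ := analyticOnNhd_const
  have heq := han.eqOn_of_preconnected_of_frequently_eq hconst isPreconnected_univ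
    (Set.mem_univ x) hfreq
  have hall : ∀ z : ℂ, F^[n] z = c := fun z => heq (Set.mem_univ z)
  -- contradiction with nonzero derivative at 0
  have hdz : deriv (F^[n]) 0 = 0 := by
    have : (F^[n]) = fun _ => c := funext hall
    rw [this]
    simp
  rw [deriv_iter_zero n] at hdz
  have hπ : (((Real.pi:ℝ)):ℂ) ≠ 0 := Complex.ofReal_ne_zero.mpr (ne_of_gt Real.pi_pos)
  exact pow_ne_zero n hπ hdz

lemma E_countable : Set.Countable {z : ℂ | ∃ n : ℕ,
    F^[n] z = ((Real.pi:ℝ):ℂ) ∨ F^[n] z = -((Real.pi:ℝ):ℂ)} := by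
  have : {z : ℂ | ∃ n : ℕ, F^[n] z = ((Real.pi:ℝ):ℂ) ∨ F^[n] z = -((Real.pi:ℝ):ℂ)}
      = ⋃ n : ℕ, ({z : ℂ | F^[n] z = ((Real.pi:ℝ):ℂ)} ∪ {z : ℂ | F^[n] z = -((Real.pi:ℝ):ℂ)}) := by
    ext z
    simp only [Set.mem_setOf_eq, Set.mem_iUnion, Set.mem_union]
  rw [this]
  exact Set.countable_iUnion (fun n => (level_countable n _).union (level_countable n _))

/-- Main lemma: interior of the bounded-orbit set of F is empty. -/
lemma interior_K_empty :
    interior {z : ℂ | Bornology.IsBounded (Set.range fun n : ℕ => F^[n] z)} = ∅ := by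
  classical
  by_contra hne
  obtain ⟨x, hx⟩ := Set.nonempty_iff_ne_empty.mpr hne
  obtain ⟨ε, hε, hball⟩ := Metric.isOpen_iff.mp isOpen_interior x hx
  have hballK : Metric.ball x ε ⊆ {z : ℂ | Bornology.IsBounded (Set.range fun n : ℕ => F^[n] z)} :=
    hball.trans interior_subset
  -- the closed sets G M
  set G : ℕ → Set ℂ := fun M => {z : ℂ | ∀ n : ℕ, ‖F^[n] z‖ ≤ M} with hG
  have hGclosed : ∀ M, IsClosed (G M) := by
    intro M
    have : G M = ⋂ n : ℕ, (fun z => F^[n] z) ⁻¹' (Metric.closedBall 0 M) := by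
      ext z
      simp [hG, Metric.mem_closedBall, dist_eq_norm]
    rw [this]
    exact isClosed_iInter (fun n => IsClosed.preimage ((F_diff.continuous).iterate n)
      Metric.isClosed_closedBall)
  have hcover : Metric.ball x ε ⊆ ⋃ M : ℕ, G M := by
    intro z hz
    have hbdd := hballK hz
    have hbdd' : Bornology.IsBounded (Set.range fun n : ℕ => F^[n] z) := hbdd
    obtain ⟨c, hc⟩ := isBounded_iff_forall_norm_le.mp hbdd'
    obtain ⟨M, hM⟩ := exists_nat_ge c
    refine Set.mem_iUnion.mpr ⟨M, fun n => ?_⟩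
    exact le_trans (hc _ (Set.mem_range_self n)) hM
  -- Baire: some G M has nonempty interior
  have hexM : ∃ M : ℕ, (interior (G M)).Nonempty := by
    by_contra hcon
    push_neg at hcon
    have hdense : ∀ M : ℕ, Dense ((G M)ᶜ) := by
      intro M
      rw [← interior_eq_empty_iff_dense_compl]
      exact hcon M
    have hint : Dense (⋂ M : ℕ, (G M)ᶜ) :=
      dense_iInter_of_isOpen (fun M => (hGclosed M).isOpen_compl) hdense
    obtain ⟨z, hz1, hz2⟩ := hint.exists_mem_open Metric.isOpen_ball
      ⟨x, Metric.mem_ball_self hε⟩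
    obtain ⟨M, hM⟩ := Set.mem_iUnion.mp (hcover hz2)
    exact (Set.mem_iInter.mp hz1 M) hM
  obtain ⟨M, y, hy⟩ := hexM
  obtain ⟨r, hr, hrball⟩ := Metric.isOpen_iff.mp isOpen_interior y hy
  have hrG : Metric.ball y r ⊆ G M := hrball.trans interior_subset
  -- Cauchy estimates on ball y (r/2)
  have hCauchy : ∀ z ∈ Metric.ball y (r/2), ∀ n : ℕ, ‖deriv (F^[n]) z‖ ≤ M / (r/4) := by
    intro z hz n
    have hsub : Metric.closedBall z (r/4) ⊆ Metric.ball y r := by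
      intro p hp
      rw [Metric.mem_closedBall] at hp
      rw [Metric.mem_ball] at hz ⊢
      calc dist p y ≤ dist p z + dist z y := dist_triangle _ _ _
        _ ≤ r/4 + dist z y := by linarith
        _ < r/4 + r/2 := by linarith
        _ < r := by linarith
    have hdiff : DifferentiableOn ℂ (F^[n]) (Metric.ball y r) :=
      (F_diff.iterate n).differentiableOn
    have heq := Complex.cderiv_eq_deriv Metric.isOpen_ball hdiff (by linarith : (0:ℝ) < r/4) hsub
    rw [← heq]
    apply Complex.norm_cderiv_le (by linarith : (0:ℝ) < r/4)
    intro p hp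
    have hpin : p ∈ G M := hrG (hsub (Metric.sphere_subset_closedBall hp))
    exact hpin n
  -- pick a point avoiding the countable exceptional set
  have hdenseE := Set.Countable.dense_compl ℂ E_countable
  obtain ⟨z, hzE, hzball⟩ := hdenseE.exists_mem_open Metric.isOpen_ball
    ⟨y, Metric.mem_ball_self (by linarith : (0:ℝ) < r/2)⟩
  have hzne : ∀ n : ℕ, F^[n] z ≠ ((Real.pi:ℝ):ℂ) ∧ F^[n] z ≠ -((Real.pi:ℝ):ℂ) := by
    intro n
    constructor <;> intro h <;> exact hzE ⟨n, by rw [h]; simp⟩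
  exact deriv_blowup z hzne (M / (r/4)) (fun n => hCauchy z hzball n)


lemma real_orbit (x : ℝ) (n : ℕ) : ∃ y : ℝ, F^[n] (x:ℂ) = (y:ℂ) ∧ |y| ≤ max |x| Real.pi := by
  induction n with
  | zero => exact ⟨x, by simp, le_max_left _ _⟩
  | succ n ih =>
    obtain ⟨y, hy, hyb⟩ := ih
    refine ⟨Real.pi * Real.sin y, ?_, ?_⟩
    · rw [Function.iterate_succ_apply', hy]
      rw [F, ← Complex.ofReal_sin, ← Complex.ofReal_mul]
    · rw [abs_mul, _root_.abs_of_nonneg Real.pi_pos.le]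
      have h1 : |Real.sin y| ≤ 1 := abs_le.mpr ⟨Real.neg_one_le_sin y, Real.sin_le_one y⟩
      calc Real.pi * |Real.sin y| ≤ Real.pi * 1 := by nlinarith [Real.pi_pos]
        _ = Real.pi := mul_one _
        _ ≤ max |x| Real.pi := le_max_right _ _

lemma real_mem_K (x : ℝ) : (x:ℂ) ∈ boundedOrbitSet F := by
  rw [boundedOrbitSet, Set.mem_setOf_eq, isBounded_iff_forall_norm_le]
  refine ⟨max |x| Real.pi, ?_⟩
  rintro w ⟨n, rfl⟩
  obtain ⟨y, hy, hyb⟩ := real_orbit x n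
  simp only
  rw [hy, Complex.norm_real, Real.norm_eq_abs]
  exact hyb

lemma F_transcendental : TranscendentalEntire F := by
  constructor
  · exact F_diff
  · rintro ⟨p, hp⟩
    have hroot : ∀ k : ℕ, p.IsRoot (((k * Real.pi : ℝ)):ℂ) := by
      intro k
      have h1 : F (((k * Real.pi : ℝ)):ℂ) = 0 := by
        rw [F, ← Complex.ofReal_sin, Real.sin_nat_mul_pi k]
        simp
      rw [Polynomial.IsRoot, ← hp, h1]
    have hinf : {x : ℂ | p.IsRoot x}.Infinite := by
      apply Set.infinite_of_injective_forall_mem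
        (f := fun k : ℕ => (((k * Real.pi : ℝ)):ℂ))
      · intro a b hab
        simp only [Complex.ofReal_inj] at hab
        have := mul_right_cancel₀ (ne_of_gt Real.pi_pos) hab
        exact_mod_cast this
      · intro k
        exact hroot k
    have hp0 : p = 0 := Polynomial.eq_zero_of_infinite_isRoot p hinf
    have h2 : F (((Real.pi/2 : ℝ)):ℂ) = 0 := by
      rw [hp, hp0]; simp
    rw [F, ← Complex.ofReal_sin, Real.sin_pi_div_two] at h2
    simp only [Complex.ofReal_one, mul_one, Complex.ofReal_eq_zero] at h2
    exact (ne_of_gt Real.pi_pos) h2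


theorem final :
    ∃ f : ℂ → ℂ, TranscendentalEntire f ∧
      ∃ z₀ ∈ boundedOrbitSet f,
        interior (connectedComponentIn (boundedOrbitSet f) z₀) = ∅ ∧
        ∃ w ∈ connectedComponentIn (boundedOrbitSet f) z₀, w ≠ z₀ := by
  refine ⟨F, F_transcendental, 0, ?_, ?_, ?_⟩
  · have := real_mem_K 0
    simpa using this
  · apply Set.subset_empty_iff.mp
    calc interior (connectedComponentIn (boundedOrbitSet F) 0)
        ⊆ interior (boundedOrbitSet F) := interior_mono (connectedComponentIn_subset _ _)
      _ = ∅ := interior_K_empty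
  · refine ⟨1, ?_, one_ne_zero⟩
    have hS : Set.range (fun x : ℝ => (x:ℂ)) ⊆ boundedOrbitSet F := by
      rintro w ⟨x, rfl⟩
      exact real_mem_K x
    have hpre : IsPreconnected (Set.range (fun x : ℝ => (x:ℂ))) := by
      rw [← Set.image_univ]
      exact isPreconnected_univ.image _ Complex.continuous_ofReal.continuousOn
    have h0 : (0:ℂ) ∈ Set.range (fun x : ℝ => (x:ℂ)) := ⟨0, by simp⟩
    have hsub := hpre.subset_connectedComponentIn h0 hS
    exact hsub ⟨1, by simp⟩


end PiSinAux

end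

/-- There exists a transcendental entire function `f` such that some component of
`K(f)` has empty interior but is not a singleton. -/
theorem exists_component_empty_interior_not_singleton :
    ∃ f : ℂ → ℂ, TranscendentalEntire f ∧
      ∃ z₀ ∈ boundedOrbitSet f,
        interior (connectedComponentIn (boundedOrbitSet f) z₀) = ∅ ∧
        ∃ w ∈ connectedComponentIn (boundedOrbitSet f) z₀, w ≠ z₀ :=
  PiSinAux.final
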